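/- Let W be an N×N nonnegative row-stochastic matrix whose associated directed graph G[W] (edge i→j iff W i j > 0) is strongly connected. Then there exists a vector ζ ∈ ℝ^N with all entries strictly positive and summing to 1 such that ζᵀ W = ζᵀ; moreover ζ is unique: any vector η ∈ ℝ^N with ηᵀ W = ηᵀ is a scalar multiple of ζ. -/

import Mathlib

open Matrix Finset

/-- A walk of length `k` from `i` to `j` in the directed graph `G[W]`
(edge `a → b` iff `W a b > 0`). -/
def Matrix.HasWalkOfLength {N : ℕ} (W : Matrix (Fin N) (Fin N) ℝ) (k : ℕ)
    (i j : Fin N) : Prop :=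
  ∃ f : Fin (k + 1) → Fin N, f 0 = i ∧ f (Fin.last k) = j ∧
    ∀ t : Fin k, 0 < W (f t.castSucc) (f t.succ)

/-- `G[W]` is strongly connected: there is a directed path from every node to
every other node. -/
def Matrix.StronglyConnectedGraph {N : ℕ} (W : Matrix (Fin N) (Fin N) ℝ) : Prop :=
  ∀ i j : Fin N, i ≠ j → ∃ k : ℕ, 0 < k ∧ W.HasWalkOfLength k i j

/-- `k` is the length of some directed cycle of `G[W]`: a directed closed walk of
positive length with no repeated nodes except the initial/final one. -/
def Matrix.IsCycleLength {N : ℕ} (W : Matrix (Fin N) (Fin N) ℝ) (k : ℕ) : Prop :=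
  0 < k ∧ ∃ f : Fin (k + 1) → Fin N,
    f (Fin.last k) = f 0 ∧
    (∀ t : Fin k, 0 < W (f t.castSucc) (f t.succ)) ∧
    Function.Injective fun t : Fin k => f t.castSucc

/-- `G[W]` is aperiodic: the gcd of the lengths of all directed cycles equals `1`,
i.e. the only natural number dividing every cycle length is `1`. -/
def Matrix.AperiodicGraph {N : ℕ} (W : Matrix (Fin N) (Fin N) ℝ) : Prop :=
  ∀ d : ℕ, (∀ k : ℕ, W.IsCycleLength k → d ∣ k) → d = 1

/-- The entrywise absolute value of a fixed left vector is again fixed. -/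
lemma aux_abs_fixed {N : ℕ} (W : Matrix (Fin N) (Fin N) ℝ)
    (hnonneg : ∀ i j, 0 ≤ W i j) (hrow : ∀ i, ∑ j, W i j = 1)
    (η : Fin N → ℝ) (hη : η ᵥ* W = η) :
    (fun i => |η i|) ᵥ* W = fun i => |η i| := by
  have hle : ∀ j, |η j| ≤ ((fun i => |η i|) ᵥ* W) j := by
    intro j
    calc |η j| = |(η ᵥ* W) j| := by rw [hη]
      _ = |∑ i, η i * W i j| := by simp [Matrix.vecMul, dotProduct]
      _ ≤ ∑ i, |η i * W i j| := Finset.abs_sum_le_sum_abs _ _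
      _ = ∑ i, |η i| * W i j := by
          refine Finset.sum_congr rfl fun i _ => ?_
          rw [abs_mul, abs_of_nonneg (hnonneg i j)]
      _ = ((fun i => |η i|) ᵥ* W) j := by simp [Matrix.vecMul, dotProduct]
  have hsum : ∑ j, ((fun i => |η i|) ᵥ* W) j = ∑ j, |η j| := by
    simp only [Matrix.vecMul, dotProduct]
    rw [Finset.sum_comm]
    simp [← Finset.mul_sum, hrow]
  have := (Finset.sum_eq_sum_iff_of_le (fun j _ => hle j)).mp hsum.symm
  funext j
  exact (this j (mem_univ j)).symm

/-- A nonnegative fixed left vector with a positive entry is everywhere positive. -/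
lemma aux_pos {N : ℕ} (W : Matrix (Fin N) (Fin N) ℝ)
    (hnonneg : ∀ i j, 0 ≤ W i j) (hsc : W.StronglyConnectedGraph)
    (v : Fin N → ℝ) (hv0 : ∀ i, 0 ≤ v i) (hfix : v ᵥ* W = v)
    {i0 : Fin N} (hi0 : 0 < v i0) : ∀ j, 0 < v j := by
  have step : ∀ a b : Fin N, 0 < v a → 0 < W a b → 0 < v b := by
    intro a b hva hW
    have h1 : v a * W a b ≤ ∑ i, v i * W i b :=
      Finset.single_le_sum (fun i _ => mul_nonneg (hv0 i) (hnonneg i b)) (mem_univ a)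
    have hb : v b = ∑ i, v i * W i b := by
      conv_lhs => rw [← hfix]
      simp [Matrix.vecMul, dotProduct]
    nlinarith [mul_pos hva hW]
  intro j
  by_cases hj : j = i0
  · rwa [hj]
  obtain ⟨k, hk, f, hf0, hflast, hstep⟩ := hsc i0 j (Ne.symm hj)
  have key : ∀ n, ∀ hn : n ≤ k, 0 < v (f ⟨n, Nat.lt_succ_of_le hn⟩) := by
    intro n
    induction n with
    | zero => intro _; have : f ⟨0, Nat.lt_succ_of_le (Nat.zero_le k)⟩ = i0 := hf0
              rw [this]; exact hi0
    | succ m ih =>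
      intro hn
      have hm : m < k := hn
      have hW := hstep ⟨m, hm⟩
      have hc : (⟨m, hm⟩ : Fin k).castSucc = ⟨m, Nat.lt_succ_of_le (Nat.le_of_lt hm)⟩ := rfl
      have hs : (⟨m, hm⟩ : Fin k).succ = ⟨m + 1, Nat.lt_succ_of_le hn⟩ := rfl
      rw [hc, hs] at hW
      exact step _ _ (ih (Nat.le_of_lt hm)) hW
  have := key k le_rfl
  have hlast : (⟨k, Nat.lt_succ_of_le le_rfl⟩ : Fin (k + 1)) = Fin.last k := rfl
  rw [hlast, hflast] at this
  exact this

/-- Existence of a nonzero fixed left vector. -/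
lemma aux_exists {N : ℕ} (hN : 0 < N) (W : Matrix (Fin N) (Fin N) ℝ)
    (hrow : ∀ i, ∑ j, W i j = 1) :
    ∃ η : Fin N → ℝ, η ≠ 0 ∧ η ᵥ* W = η := by
  haveI : Nonempty (Fin N) := ⟨⟨0, hN⟩⟩
  have hdet : (W - 1).det = 0 := by
    rw [← Matrix.exists_mulVec_eq_zero_iff]
    refine ⟨fun _ => 1, ?_, ?_⟩
    · intro h
      have := congrFun h ⟨0, hN⟩
      norm_num at this
    · rw [Matrix.sub_mulVec, Matrix.one_mulVec]
      funext i
      simp [Matrix.mulVec, dotProduct, hrow i]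
  have hdetT : ((W - 1)ᵀ).det = 0 := by rw [Matrix.det_transpose]; exact hdet
  obtain ⟨η, hη0, hη⟩ := Matrix.exists_mulVec_eq_zero_iff.mpr hdetT
  refine ⟨η, hη0, ?_⟩
  have : (Wᵀ - 1) *ᵥ η = 0 := by
    simpa [Matrix.transpose_sub] using hη
  have h2 : Wᵀ *ᵥ η - η = 0 := by
    simpa [Matrix.sub_mulVec, Matrix.one_mulVec] using this
  have h3 : Wᵀ *ᵥ η = η := by
    have := sub_eq_zero.mp h2; exact this
  rw [← Matrix.mulVec_transpose]; exact h3

/-- a strongly connected row-stochastic matrix admits a unique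
strictly positive left eigenvector for the eigenvalue `1`, normalized to sum `1`. -/
theorem strongly_connected_left_perron_vector {N : ℕ} (hN : 0 < N)
    (W : Matrix (Fin N) (Fin N) ℝ)
    (hnonneg : ∀ i j, 0 ≤ W i j)
    (hrow : ∀ i, ∑ j, W i j = 1)
    (hsc : W.StronglyConnectedGraph) :
    ∃ ζ : Fin N → ℝ, (∀ i, 0 < ζ i) ∧ (∑ i, ζ i = 1) ∧ ζ ᵥ* W = ζ ∧
      ∀ η : Fin N → ℝ, η ᵥ* W = η → ∃ c : ℝ, η = c • ζ := by
  obtain ⟨η, hη0, hη⟩ := aux_exists hN W hrow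
  set a : Fin N → ℝ := fun i => |η i| with ha
  have hafix : a ᵥ* W = a := aux_abs_fixed W hnonneg hrow η hη
  have ha0 : ∀ i, 0 ≤ a i := fun i => abs_nonneg _
  obtain ⟨i1, hi1⟩ : ∃ i, η i ≠ 0 := by
    by_contra h
    push_neg at h
    exact hη0 (funext h)
  have hai1 : 0 < a i1 := abs_pos.mpr hi1
  have hapos : ∀ j, 0 < a j := aux_pos W hnonneg hsc a ha0 hafix hai1
  set S := ∑ i, a i with hS
  have hSpos : 0 < S := Finset.sum_pos (fun i _ => hapos i) ⟨⟨0, hN⟩, mem_univ _⟩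
  refine ⟨S⁻¹ • a, fun i => mul_pos (inv_pos.mpr hSpos) (hapos i), ?_, ?_, ?_⟩
  · simp only [Pi.smul_apply, smul_eq_mul, ← Finset.mul_sum]
    field_simp
    exact hS.symm
  · rw [Matrix.smul_vecMul, hafix]
  · intro η' hη'
    set ζ := S⁻¹ • a with hζ
    have hζfix : ζ ᵥ* W = ζ := by rw [hζ, Matrix.smul_vecMul, hafix]
    have hζpos : ∀ i, 0 < ζ i := fun i => by
      exact mul_pos (inv_pos.mpr hSpos) (hapos i)
    set i0 : Fin N := ⟨0, hN⟩ with hi0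
    set c := η' i0 / ζ i0 with hc
    set μ : Fin N → ℝ := η' - c • ζ with hμ
    have hμfix : μ ᵥ* W = μ := by
      rw [hμ, Matrix.sub_vecMul, Matrix.smul_vecMul, hη', hζfix]
    have hμ0 : μ i0 = 0 := by
      simp only [hμ, Pi.sub_apply, Pi.smul_apply, smul_eq_mul, hc]
      rw [div_mul_cancel₀ _ (hζpos i0).ne', sub_self]
    have hμzero : μ = 0 := by
      by_contra hne
      obtain ⟨i2, hi2⟩ : ∃ i, μ i ≠ 0 := by
        by_contra h; push_neg at h; exact hne (funext h)
      have habs : (fun i => |μ i|) ᵥ* W = fun i => |μ i| :=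
        aux_abs_fixed W hnonneg hrow μ hμfix
      have : ∀ j, 0 < |μ j| :=
        aux_pos W hnonneg hsc _ (fun i => abs_nonneg _) habs (abs_pos.mpr hi2)
      have := this i0
      rw [hμ0] at this
      simp at this
    refine ⟨c, ?_⟩
    have := sub_eq_zero.mp (hμ ▸ hμzero)
    exact this
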